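/- Let F be a field, let q' and q'' be quadratic forms on finite-dimensional F-vector spaces V' and V'', and let q = q' ⊥ q'' be their orthogonal sum on V = V' × V', i.e. q(v,w) = q'(v) + q''(w). Let a ∈ F. If q' is universal (every element of F∗ is represented by q') and the representation graph G_{q',a} is connected, then the representation graph G_{q,a} is connected. -/

import Mathlib

open QuadraticMap Module

/-- The representation graph `G_{q,a}`: vertices are the vectors of `V`, and distinct
`x, y` are adjacent iff `q (x - y) = a`. -/
def repGraph {F V : Type*} [Field F] [AddCommGroup V] [Module F V]
    (q : QuadraticForm F V) (a : F) : SimpleGraph V where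
  Adj x y := x ≠ y ∧ q (x - y) = a
  symm := by
    constructor
    rintro x y ⟨hxy, h⟩
    refine ⟨hxy.symm, ?_⟩
    rw [← neg_sub x y, QuadraticMap.map_neg]
    exact h
  loopless := by constructor; rintro x ⟨h, -⟩; exact h rfl

/-- If `q'` is universal and `G_{q',a}` is connected, then the representation graph of the
orthogonal sum `q' ⊥ q''` is connected. -/
theorem stmt_4 {F V' V'' : Type*} [Field F]
    [AddCommGroup V'] [Module F V'] [FiniteDimensional F V']
    [AddCommGroup V''] [Module F V''] [FiniteDimensional F V'']
    (q' : QuadraticForm F V') (q'' : QuadraticForm F V'') (a : F)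
    (huniv : ∀ c : F, c ≠ 0 → ∃ v : V', q' v = c)
    (hconn : (repGraph q' a).Connected) :
    (repGraph (q'.prod q'') a).Connected := by
  have hA : ∀ (w : V'') (x y : V'), (repGraph (q'.prod q'') a).Reachable (x, w) (y, w) := by
    intro w x y
    have h := hconn.preconnected x y
    refine h.map ⟨fun z => (z, w), ?_⟩
    rintro p r ⟨hne, hq⟩
    refine ⟨fun h => hne (congrArg Prod.fst h), ?_⟩
    show (q'.prod q'') (p - r, w - w) = a
    simp [QuadraticMap.prod_apply, hq]
  refine ⟨fun p r => ?_⟩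
  obtain ⟨x, w⟩ := p
  obtain ⟨y, u⟩ := r
  by_cases hwu : w = u
  · subst hwu; exact hA w x y
  · by_cases hq : q'' (w - u) = a
    · have hadj : (repGraph (q'.prod q'') a).Adj (x, w) (x, u) := by
        refine ⟨fun h => hwu (congrArg Prod.snd h), ?_⟩
        show (q'.prod q'') (x - x, w - u) = a
        simp [QuadraticMap.prod_apply, hq]
      exact hadj.reachable.trans (hA u x y)
    · obtain ⟨v, hv⟩ := huniv (a - q'' (w - u)) (sub_ne_zero.mpr (Ne.symm hq))
      have hadj : (repGraph (q'.prod q'') a).Adj (x, w) (x + v, u) := by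
        refine ⟨fun h => hwu (congrArg Prod.snd h), ?_⟩
        show (q'.prod q'') (x - (x + v), w - u) = a
        have : x - (x + v) = -v := by abel
        rw [this]
        simp [QuadraticMap.prod_apply, hv]
      exact hadj.reachable.trans (hA u (x + v) y)
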